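/- Let T be a triangulated category, A a hopfian object and E an exotic object. Then T(E, A) = 0, i.e., every morphism from E to A is zero. -/

import Mathlib

open CategoryTheory Limits Pretriangulated

variable {C : Type*} [Category C] [Preadditive C] [HasZeroObject C]
  [HasShift C ℤ] [∀ n : ℤ, (shiftFunctor C n).Additive] [Pretriangulated C]
  [IsTriangulated C]

/-- A Hopf map for `A`: a morphism `η : ΣA ⟶ A` with `2η = 0` such that for some exact
triangle `A →2 A →i C →q ΣA` one has `iηq = 2·1_C`. -/
def IsHopfMap (A : C) (η : A⟦(1 : ℤ)⟧ ⟶ A) : Prop :=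
  (2 : ℤ) • η = 0 ∧
  ∃ (Cone : C) (i : A ⟶ Cone) (q : Cone ⟶ A⟦(1 : ℤ)⟧),
    Triangle.mk ((2 : ℤ) • 𝟙 A) i q ∈ (distTriang C) ∧
      q ≫ η ≫ i = (2 : ℤ) • 𝟙 Cone

/-- An object admitting a Hopf map. -/
def IsHopfian (A : C) : Prop := ∃ η : A⟦(1 : ℤ)⟧ ⟶ A, IsHopfMap A η

/-- An exotic object: one fitting in an exact triangle `E →2 E →2 E →h ΣE`. -/
def IsExotic (E : C) : Prop :=
  ∃ h : E ⟶ E⟦(1 : ℤ)⟧,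
    Triangle.mk ((2 : ℤ) • 𝟙 E) ((2 : ℤ) • 𝟙 E) h ∈ distTriang C

/-- If `A` is hopfian and `E` is exotic, then every morphism `E ⟶ A` is zero. -/
theorem stmt_11 (A E : C) (hA : IsHopfian A) (hE : IsExotic E) (f : E ⟶ A) : f = 0 := by
  obtain ⟨η, hη2, Cone, i, q, hT, hHopf⟩ := hA
  obtain ⟨h, hTE⟩ := hE
  -- 4 · 1_E = 0
  have h4 : (4 : ℤ) • (𝟙 E) = 0 := by
    have : ((2 : ℤ) • 𝟙 E) ≫ ((2 : ℤ) • 𝟙 E) = 0 := comp_distTriang_mor_zero₁₂ _ hTE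
    simp only [Triangle.mk_mor₁, Triangle.mk_mor₂, Preadditive.zsmul_comp,
      Preadditive.comp_zsmul, Category.comp_id, Category.id_comp, smul_smul] at this
    norm_num at this
    simpa using this
  -- h = 2 • c for some c
  obtain ⟨c, hc1, -⟩ : ∃ c : E ⟶ E⟦(1 : ℤ)⟧, ((2 : ℤ) • 𝟙 E) ≫ c = 𝟙 E ≫ h ∧ _ :=
    complete_distinguished_triangle_morphism
    (Triangle.mk ((2 : ℤ) • 𝟙 E) ((2 : ℤ) • 𝟙 E) h)
    (Triangle.mk ((2 : ℤ) • 𝟙 E) ((2 : ℤ) • 𝟙 E) h).rotate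
    hTE (rot_of_distTriang _ hTE) (𝟙 E) (𝟙 E)
    (by exact (Category.comp_id _).trans (Category.id_comp _).symm)
  have hc : h = (2 : ℤ) • c := by
    simpa [Preadditive.zsmul_comp] using hc1.symm
  -- key step: every map E ⟶ A is divisible by 2
  have key : ∀ f' : E ⟶ A, ∃ e : E ⟶ A, f' = (2 : ℤ) • e := by
    intro f'
    obtain ⟨g, hg1, hg2⟩ : ∃ g : E ⟶ Cone, ((2 : ℤ) • 𝟙 E) ≫ g = f' ≫ i ∧
        h ≫ f'⟦(1 : ℤ)⟧' = g ≫ q := complete_distinguished_triangle_morphism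
      (Triangle.mk ((2 : ℤ) • 𝟙 E) ((2 : ℤ) • 𝟙 E) h)
      (Triangle.mk ((2 : ℤ) • 𝟙 A) i q)
      hTE hT f' f' (show ((2 : ℤ) • 𝟙 E) ≫ f' = f' ≫ ((2 : ℤ) • 𝟙 A) by
        simp [Preadditive.zsmul_comp, Preadditive.comp_zsmul])
    -- hg1 : (2 • 𝟙 E) ≫ g = f' ≫ i ; hg2 : h ≫ f'⟦1⟧' = g ≫ q
    have h2g : (2 : ℤ) • g = 0 := by
      have : (2 : ℤ) • g = g ≫ ((2 : ℤ) • 𝟙 Cone) := by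
        simp [Preadditive.comp_zsmul]
      rw [this, ← hHopf, ← Category.assoc, ← hg2, hc]
      simp only [Preadditive.zsmul_comp, Category.assoc]
      have e2 : (2 : ℤ) • (c ≫ (shiftFunctor C 1).map f' ≫ η ≫ i)
          = c ≫ (shiftFunctor C 1).map f' ≫ ((2 : ℤ) • η) ≫ i := by
        simp [Preadditive.comp_zsmul, Preadditive.zsmul_comp]
      rw [e2, hη2]
      simp
    have hfi : f' ≫ i = 0 := by
      rw [← hg1]
      have e3 : ((2 : ℤ) • 𝟙 E) ≫ g = (2 : ℤ) • g := by
        simp [Preadditive.zsmul_comp]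
      rw [e3, h2g]
    obtain ⟨e, he⟩ : ∃ e : E ⟶ A, f' = e ≫ ((2 : ℤ) • 𝟙 A) :=
      Triangle.coyoneda_exact₂ _ hT f' hfi
    exact ⟨e, by simpa [Preadditive.comp_zsmul] using he⟩
  obtain ⟨e, he⟩ := key f
  obtain ⟨e', he'⟩ := key e
  have : f = (4 : ℤ) • e' := by
    rw [he, he', smul_smul]; norm_num
  rw [this, ← Category.id_comp e', ← Preadditive.zsmul_comp, h4, zero_comp]
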